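/- arXiv:1911.11973 — 4 statements merged into one kernel-verified Lean document; each statement's English description precedes it below -/
import Mathlib

section
/- Let φ = (1+√5)/2 and frac(x) = x − ⌊x⌋. There exists a constant C > 0 such that for all real numbers D and Δ with 0 < Δ ≤ D and every point p ∈ ℝ² with ‖p‖ = D, there exists a natural number k with k ≤ C·D/Δ such that the ray from the origin at angle 2π·frac(k·φ) intersects the closed ball of radius Δ/2 centered at p. -/
open Real

noncomputable def gphi : ℝ := (1 + Real.sqrt 5) / 2
noncomputable def gpsi : ℝ := (1 - Real.sqrt 5) / 2

lemma sqrt5_sq : Real.sqrt 5 ^ 2 = 5 := Real.sq_sqrt (by norm_num)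

lemma sqrt5_gt_two : (2:ℝ) < Real.sqrt 5 := by
  nlinarith [sqrt5_sq, Real.sqrt_nonneg 5]

lemma gphi_sq : gphi ^ 2 = gphi + 1 := by
  unfold gphi; nlinarith [sqrt5_sq]

lemma gpsi_sq : gpsi ^ 2 = gpsi + 1 := by
  unfold gpsi; nlinarith [sqrt5_sq]

lemma gphi_pos : 0 < gphi := by unfold gphi; nlinarith [sqrt5_gt_two]

lemma one_le_gphi : 1 ≤ gphi := by unfold gphi; nlinarith [sqrt5_gt_two]

lemma abs_gpsi_mul_gphi : |gpsi| * gphi = 1 := by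
  have : |gpsi| = (Real.sqrt 5 - 1)/2 := by
    rw [abs_of_nonpos]
    · unfold gpsi; ring
    · unfold gpsi; nlinarith [sqrt5_gt_two]
  rw [this]; unfold gphi; nlinarith [sqrt5_sq]

lemma fib_mul_gphi (n : ℕ) : (Nat.fib n : ℝ) * gphi = Nat.fib (n+1) - gpsi ^ n := by
  induction n using Nat.twoStepInduction with
  | zero => simp
  | one => simp [Nat.fib]; unfold gphi gpsi; ring
  | more n ih1 ih2 =>
    rw [Nat.fib_add_two]
    push_cast
    rw [Nat.fib_add_two (n := n+1)]
    push_cast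
    have h := gpsi_sq
    linear_combination ih1 + ih2 + (gpsi ^ n) * h

lemma fib_le_gphi_pow (n : ℕ) : (Nat.fib n : ℝ) ≤ gphi ^ n := by
  induction n using Nat.twoStepInduction with
  | zero => simp
  | one => simpa using one_le_gphi
  | more n ih1 ih2 =>
    rw [Nat.fib_add_two]
    push_cast
    have h1 : (0:ℝ) ≤ gphi ^ n := le_of_lt (pow_pos gphi_pos n)
    have h := gphi_sq
    have e : gphi^(n+2) = gphi^(n+1) + gphi^n := by
      have : gphi^(n+2) = gphi^n * gphi^2 := by ring
      rw [this, h]; ring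
    have e2 : gphi^(n+1) = gphi^n * gphi := by ring
    nlinarith [ih1, ih2, gphi_pos]

lemma abs_gpsi_pow_le (n : ℕ) (hn : 0 < n) : |gpsi| ^ n ≤ 1 / Nat.fib n := by
  have hfibpos : (0:ℝ) < Nat.fib n := by exact_mod_cast Nat.fib_pos.mpr hn
  have hphipow : (0:ℝ) < gphi ^ n := pow_pos gphi_pos n
  have hmul : |gpsi| ^ n * gphi ^ n = 1 := by
    rw [← mul_pow, abs_gpsi_mul_gphi, one_pow]
  have h1 : |gpsi| ^ n = 1 / gphi ^ n := by
    field_simp at hmul ⊢; linarith [hmul]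
  rw [h1]
  apply one_div_le_one_div_of_le hfibpos (fib_le_gphi_pow n)

lemma golden_cover (x : ℝ) (n : ℕ) (hn : 2 ≤ n) :
    ∃ k : ℕ, k < Nat.fib n ∧ ∃ m : ℤ, |(k:ℝ) * gphi - m - x| ≤ 2 / (Nat.fib n : ℝ) := by
  set q := Nat.fib n with hqdef
  have hq : 0 < q := Nat.fib_pos.mpr (by omega)
  have hqR : (0:ℝ) < q := by exact_mod_cast hq
  haveI : NeZero q := ⟨hq.ne'⟩
  set P := Nat.fib (n+1) with hPdef
  have hco : Nat.Coprime P q := (Nat.fib_coprime_fib_succ n).symm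
  set j : ℤ := ⌊x * q⌋ with hjdef
  set a : ZMod q := (j : ZMod q) * ((P : ZMod q))⁻¹ with hadef
  refine ⟨a.val, ZMod.val_lt a, ?_⟩
  set k : ℕ := a.val with hkdef
  have hk : k < q := ZMod.val_lt a
  have hmod : (((k:ℤ) * P - j : ℤ) : ZMod q) = 0 := by
    push_cast
    rw [hkdef, ZMod.natCast_val, ZMod.cast_id, hadef]
    rw [mul_assoc, ZMod.inv_mul_of_unit]
    · ring
    · exact (ZMod.unitOfCoprime P hco).isUnit
  have hdvd : (q:ℤ) ∣ ((k:ℤ) * P - j) := (ZMod.intCast_zmod_eq_zero_iff_dvd _ _).mp hmod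
  obtain ⟨r, hr⟩ := hdvd
  refine ⟨r, ?_⟩
  have hfib : (q:ℝ) * gphi = P - gpsi ^ n := fib_mul_gphi n
  have hrR : (k:ℝ) * P - j = q * r := by exact_mod_cast hr
  have key : (k:ℝ) * gphi - r - x = ((j:ℝ)/q - x) - (k:ℝ) * gpsi^n / q := by
    field_simp
    nlinarith [hfib, hrR]
  have h1 : (j:ℝ) ≤ x * q := Int.floor_le _
  have h2 : x * q < j + 1 := Int.lt_floor_add_one _
  have b1 : |(j:ℝ)/q - x| ≤ 1/q := by
    have e : (j:ℝ)/q - x = (j - x*q)/q := by field_simp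
    rw [e, abs_div, abs_of_pos hqR]
    gcongr
    rw [abs_le]
    constructor <;> linarith
  have b2 : |(k:ℝ) * gpsi^n / q| ≤ 1/q := by
    rw [abs_div, abs_mul, abs_pow, abs_of_pos hqR, Nat.abs_cast]
    gcongr
    calc (k:ℝ) * |gpsi|^n ≤ q * (1/q) := by
          apply mul_le_mul
          · exact_mod_cast hk.le
          · exact abs_gpsi_pow_le n (by omega)
          · positivity
          · positivity
      _ = 1 := by field_simp
  calc |(k:ℝ) * gphi - r - x| = |((j:ℝ)/q - x) - (k:ℝ) * gpsi^n / q| := by rw [key]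
    _ ≤ |(j:ℝ)/q - x| + |(k:ℝ) * gpsi^n / q| := by
        rw [sub_eq_add_neg]
        exact (abs_add_le _ _).trans (by rw [abs_neg])
    _ ≤ 1/q + 1/q := add_le_add b1 b2
    _ = 2/q := by ring

lemma le_fib_add_two (n : ℕ) : n ≤ Nat.fib (n + 2) := by
  induction n with
  | zero => simp
  | succ n ih =>
    have h := Nat.fib_add_two (n := n + 1)
    have h2 : 1 ≤ Nat.fib (n + 1) := Nat.fib_pos.mpr (Nat.succ_pos n)
    have h3 : Nat.fib (n + 2) ≥ n := ih
    have h4 : Nat.fib (n+1+2) = Nat.fib (n+1) + Nat.fib (n+2) := h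
    omega

lemma exists_good_fib (R : ℝ) (hR2 : 2 < R) :
    ∃ n : ℕ, 2 ≤ n ∧ R ≤ (Nat.fib n : ℝ) ∧ (Nat.fib n : ℝ) < 2 * R := by
  classical
  have hex : ∃ nn : ℕ, R ≤ (Nat.fib nn : ℝ) := by
    refine ⟨⌈R⌉₊ + 2, ?_⟩
    have h1 : R ≤ (⌈R⌉₊ : ℝ) := Nat.le_ceil R
    have h2 : (⌈R⌉₊ : ℕ) ≤ Nat.fib (⌈R⌉₊ + 2) := le_fib_add_two _
    calc R ≤ (⌈R⌉₊ : ℝ) := h1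
      _ ≤ _ := by exact_mod_cast h2
  set n₀ := Nat.find hex with hn₀def
  have hfib0 : R ≤ (Nat.fib n₀ : ℝ) := Nat.find_spec hex
  have h4 : 4 ≤ n₀ := by
    by_contra h
    push_neg at h
    have hm : Nat.fib n₀ ≤ Nat.fib 3 := Nat.fib_mono (by omega)
    have h3 : (Nat.fib n₀ : ℝ) ≤ 2 := by
      have : Nat.fib 3 = 2 := rfl
      exact_mod_cast hm.trans_eq this
    linarith
  have hmin : (Nat.fib (n₀ - 1) : ℝ) < R := by
    have := Nat.find_min hex (m := n₀ - 1) (by omega)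
    exact lt_of_not_ge this
  refine ⟨n₀, by omega, hfib0, ?_⟩
  obtain ⟨n₁, hn1⟩ : ∃ n₁, n₀ = n₁ + 2 := ⟨n₀ - 2, by omega⟩
  have hmono : Nat.fib n₁ ≤ Nat.fib (n₁ + 1) := Nat.fib_mono (by omega)
  have hmin' : (Nat.fib (n₁ + 1) : ℝ) < R := by
    have he : n₀ - 1 = n₁ + 1 := by omega
    rwa [he] at hmin
  have hc : (Nat.fib n₁ : ℝ) ≤ (Nat.fib (n₁+1) : ℝ) := by exact_mod_cast hmono
  rw [hn1, Nat.fib_add_two]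
  push_cast
  linarith

/-- The unit vector of `ℝ²` in direction `α`. -/
noncomputable def rayDir (α : ℝ) : EuclideanSpace ℝ (Fin 2) :=
  (EuclideanSpace.equiv (Fin 2) ℝ).symm ![Real.cos α, Real.sin α]

/-- There is a constant `C > 0` such that for all `0 < Δ ≤ D` and every point
`p` with `‖p‖ = D`, some golden-angle spoke of index `k ≤ C * D / Δ` (the ray from the
origin at angle `2π · frac (k φ)`) intersects the closed ball of radius `Δ/2` around `p`. -/
theorem goldenFA_discovery :
    ∃ C : ℝ, 0 < C ∧ ∀ D Δ : ℝ, 0 < Δ → Δ ≤ D →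
      ∀ p : EuclideanSpace ℝ (Fin 2), ‖p‖ = D →
        ∃ k : ℕ, (k : ℝ) ≤ C * D / Δ ∧
          ∃ t : ℝ, 0 ≤ t ∧
            t • rayDir (2 * Real.pi * Int.fract ((k : ℝ) * ((1 + Real.sqrt 5) / 2)))
              ∈ Metric.closedBall p (Δ / 2) := by
  refine ⟨16 * Real.pi, by positivity, ?_⟩
  intro D Δ hΔ hΔD p hp
  have hD : 0 < D := lt_of_lt_of_le hΔ hΔD
  have hπ := Real.pi_pos
  set R : ℝ := 8 * Real.pi * D / Δ with hRdef
  have hRpos : 0 < R := by positivity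
  have hR1 : 8 * Real.pi ≤ R := by
    rw [hRdef, le_div_iff₀ hΔ]; nlinarith
  have hR2 : 2 < R := by nlinarith [Real.pi_gt_three]
  obtain ⟨n₀, hn2, hfib0, hfib_lt⟩ := exists_good_fib R hR2
  -- angle of p
  set p0 := p 0 with hp0def
  set p1 := p 1 with hp1def
  have hnorm : Real.sqrt (p0^2 + p1^2) = D := by
    rw [← hp, EuclideanSpace.norm_eq]
    congr 1
    rw [Fin.sum_univ_two]
    simp [Real.norm_eq_abs, sq_abs, hp0def, hp1def]
  set z : ℂ := ⟨p0, p1⟩ with hzdef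
  have hz : ‖z‖ = D := by
    rw [Complex.norm_def, Complex.normSq_mk]
    rw [← hnorm]; congr 1; ring
  have hz0 : z ≠ 0 := by
    intro h
    rw [h] at hz
    simp at hz
    exact hD.ne' hz.symm
  set θ := Complex.arg z with hθdef
  have hcosθ : p0 = D * Real.cos θ := by
    rw [hθdef, Complex.cos_arg hz0, hz]
    field_simp
    rfl
  have hsinθ : p1 = D * Real.sin θ := by
    rw [hθdef, Complex.sin_arg, hz]
    field_simp
    rfl
  obtain ⟨k, hk, m, hkm⟩ := golden_cover (θ / (2 * Real.pi)) n₀ hn2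
  have hkR : (k:ℝ) < Nat.fib n₀ := by exact_mod_cast hk
  refine ⟨k, ?_, D, hD.le, ?_⟩
  · refine le_of_lt ?_
    calc (k:ℝ) < 2 * R := hkR.trans hfib_lt
      _ = 16 * Real.pi * D / Δ := by rw [hRdef]; ring
  set η := 2*Real.pi*((k:ℝ)*gphi - m - θ/(2*Real.pi)) with hηdef
  have hη_bound : |η| ≤ Δ/(2*D) := by
    rw [hηdef, abs_mul, abs_of_pos (by positivity : (0:ℝ) < 2*Real.pi)]
    have h2q : 2 / (Nat.fib n₀ : ℝ) ≤ 2 / R := by gcongr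
    calc 2*Real.pi * |(k:ℝ)*gphi - m - θ/(2*Real.pi)| ≤ 2*Real.pi * (2/R) := by
          exact mul_le_mul_of_nonneg_left (hkm.trans h2q) (by positivity)
      _ = Δ/(2*D) := by rw [hRdef]; field_simp; ring
  have hg : (k:ℝ)*((1 + Real.sqrt 5)/2) = (k:ℝ)*gphi := by rw [gphi]
  set β := 2*Real.pi * Int.fract ((k:ℝ) * ((1 + Real.sqrt 5)/2)) with hβdef
  have hβ : β = (θ + η) + ((m - ⌊(k:ℝ)*gphi⌋ : ℤ) : ℝ) * (2*Real.pi) := by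
    rw [hβdef, hg, Int.fract, hηdef]
    push_cast
    field_simp
    ring
  have hcosβ : Real.cos β = Real.cos (θ + η) := by
    rw [hβ, Real.cos_add_int_mul_two_pi]
  have hsinβ : Real.sin β = Real.sin (θ + η) := by
    rw [hβ, Real.sin_add_int_mul_two_pi]
  rw [Metric.mem_closedBall, dist_eq_norm]
  have hvnorm : ‖D • rayDir β - p‖
      = Real.sqrt ((D*Real.cos β - p0)^2 + (D*Real.sin β - p1)^2) := by
    rw [EuclideanSpace.norm_eq]
    congr 1
    rw [Fin.sum_univ_two]
    have e0 : (D • rayDir β - p) 0 = D * Real.cos β - p0 := by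
      simp [rayDir, hp0def]
    have e1 : (D • rayDir β - p) 1 = D * Real.sin β - p1 := by
      simp [rayDir, hp1def]
    rw [e0, e1]
    simp [Real.norm_eq_abs, sq_abs]
  rw [hvnorm, hcosβ, hsinβ]
  have h3 : Real.cos η = Real.cos (θ+η) * Real.cos θ + Real.sin (θ+η) * Real.sin θ := by
    rw [← Real.cos_sub]
    ring_nf
  have expand : (Real.cos (θ+η) - Real.cos θ)^2 + (Real.sin (θ+η) - Real.sin θ)^2
      = 2 - 2*Real.cos η := by
    linear_combination Real.sin_sq_add_cos_sq (θ+η) + Real.sin_sq_add_cos_sq θ + 2*h3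
  have hcosη : 1 - Real.cos η ≤ η^2/2 := by
    have h4 := Real.sin_sq_le_sq (x := η/2)
    have hct := Real.cos_two_mul (η/2)
    rw [show (2:ℝ)*(η/2) = η by ring] at hct
    have hpy := Real.sin_sq_add_cos_sq (η/2)
    have e4 : ((η/2):ℝ)^2 = η^2/4 := by ring
    linarith
  have hsq : η^2 ≤ (Δ/(2*D))^2 := by
    have hb := abs_le.mp hη_bound
    exact sq_le_sq' hb.1 hb.2
  have hS : (D*Real.cos (θ+η) - p0)^2 + (D*Real.sin (θ+η) - p1)^2 ≤ (Δ/2)^2 := by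
    rw [hcosθ, hsinθ]
    have e2 : (D*Real.cos (θ+η) - D*Real.cos θ)^2 + (D*Real.sin (θ+η) - D*Real.sin θ)^2
        = D^2 * ((Real.cos (θ+η) - Real.cos θ)^2 + (Real.sin (θ+η) - Real.sin θ)^2) := by
      ring
    rw [e2, expand]
    have hfield : D^2 * (Δ/(2*D))^2 = (Δ/2)^2 := by field_simp
    calc D^2 * (2 - 2*Real.cos η) ≤ D^2 * η^2 := by
          apply mul_le_mul_of_nonneg_left _ (sq_nonneg D)
          linarith
      _ ≤ D^2 * (Δ/(2*D))^2 := mul_le_mul_of_nonneg_left hsq (sq_nonneg D)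
      _ = (Δ/2)^2 := hfield
  calc Real.sqrt ((D*Real.cos (θ+η) - p0)^2 + (D*Real.sin (θ+η) - p1)^2)
      ≤ Real.sqrt ((Δ/2)^2) := Real.sqrt_le_sqrt hS
    _ = Δ/2 := Real.sqrt_sq (by positivity)
end

section
/- For all reals D and Δ with 0 < Δ < D and every natural number n with n < π/arcsin(Δ/(2D)), for any choice of n rays from the origin in ℝ² there exists a point p ∈ ℝ² with ‖p‖ = D such that none of the n rays intersects the closed ball of radius Δ/2 centered at p. Consequently, Ω(D/Δ) spokes from the nest are necessary to guarantee discovery of a cluster of diameter Δ at distance D. -/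
lemma rayDir_norm (α : ℝ) : ‖rayDir α‖ = 1 := by
  have : Real.cos α ^ 2 + Real.sin α ^ 2 = 1 := Real.cos_sq_add_sin_sq α
  rw [rayDir, EuclideanSpace.norm_eq, Fin.sum_univ_two]
  show Real.sqrt (‖![Real.cos α, Real.sin α] 0‖^2 + ‖![Real.cos α, Real.sin α] 1‖^2) = 1
  simp only [Matrix.cons_val_zero, Matrix.cons_val_one, Matrix.head_cons, Real.norm_eq_abs,
    sq_abs]
  rw [this, Real.sqrt_one]

lemma rayDir_inner (a b : ℝ) :
    (inner ℝ (rayDir a) (rayDir b) : ℝ) = Real.cos (b - a) := by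
  rw [rayDir, rayDir, PiLp.inner_apply, Fin.sum_univ_two, Real.cos_sub]
  simp [EuclideanSpace.equiv, mul_comm]

set_option maxHeartbeats 1000000 in
/-- lower bound: For all `0 < Δ < D` and every family of
`n < π / arcsin (Δ/(2D))` rays from the origin, there is a point `p` with `‖p‖ = D` such
that no ray of the family intersects the closed ball of radius `Δ/2` around `p`.
Hence `Ω(D/Δ)` spokes are necessary. -/
theorem spoke_lower_bound (D Δ : ℝ) (hΔ : 0 < Δ) (hΔD : Δ < D)
    (n : ℕ) (hn : (n : ℝ) < Real.pi / Real.arcsin (Δ / (2 * D)))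
    (α : Fin n → ℝ) :
    ∃ p : EuclideanSpace ℝ (Fin 2), ‖p‖ = D ∧
      ∀ i : Fin n, ¬ ∃ t : ℝ, 0 ≤ t ∧ t • rayDir (α i) ∈ Metric.closedBall p (Δ / 2) := by
  have hD : 0 < D := hΔ.trans hΔD
  have hπ : 0 < Real.pi := Real.pi_pos
  set s : ℝ := Δ / (2 * D) with hs_def
  have hs0 : 0 < s := by positivity
  have hs1 : s < 1 := by
    rw [hs_def, div_lt_one (by linarith)]; linarith
  set ε : ℝ := Real.arcsin s with hε_def
  have hε0 : 0 < ε := Real.arcsin_pos.mpr hs0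
  have hε2 : ε < Real.pi / 2 := Real.arcsin_lt_pi_div_two.mpr hs1
  have hsinε : Real.sin ε = s := Real.sin_arcsin (by linarith) hs1.le
  rw [lt_div_iff₀ hε0] at hn
  -- n * ε < π
  haveI : Fact (0 < 2 * Real.pi) := ⟨by linarith⟩
  set U : Set (AddCircle (2 * Real.pi)) :=
    ⋃ i : Fin n, Metric.closedBall ((α i : AddCircle (2 * Real.pi))) ε with hU_def
  have hvol : MeasureTheory.volume U < MeasureTheory.volume (Set.univ : Set (AddCircle (2 * Real.pi))) := by
    rw [AddCircle.measure_univ]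
    calc MeasureTheory.volume U ≤ ∑' i : Fin n,
          MeasureTheory.volume (Metric.closedBall ((α i : AddCircle (2 * Real.pi))) ε) :=
          MeasureTheory.measure_iUnion_le _
      _ = ∑' _ : Fin n, ENNReal.ofReal (min (2 * Real.pi) (2 * ε)) := by
          simp_rw [AddCircle.volume_closedBall]
      _ = (n : ENNReal) * ENNReal.ofReal (min (2 * Real.pi) (2 * ε)) := by
          rw [tsum_fintype]
          simp [Finset.sum_const, nsmul_eq_mul]
      _ ≤ (n : ENNReal) * ENNReal.ofReal (2 * ε) := by
          gcongr
          exact min_le_right _ _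
      _ = ENNReal.ofReal ((n : ℝ) * (2 * ε)) := by
          conv_rhs => rw [ENNReal.ofReal_mul (by positivity : (0:ℝ) ≤ (n:ℝ)),
            ENNReal.ofReal_natCast]
      _ < ENNReal.ofReal (2 * Real.pi) := by
          rw [ENNReal.ofReal_lt_ofReal_iff (by linarith)]
          nlinarith
  have hne : ∃ x : AddCircle (2 * Real.pi), x ∉ U := by
    by_contra h
    push_neg at h
    rw [Set.eq_univ_iff_forall.mpr h] at hvol
    exact lt_irrefl _ hvol
  obtain ⟨x, hx⟩ := hne
  obtain ⟨θ, rfl⟩ := QuotientAddGroup.mk_surjective x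
  refine ⟨D • rayDir θ, ?_, ?_⟩
  · rw [norm_smul, rayDir_norm, Real.norm_eq_abs, abs_of_pos hD, mul_one]
  intro i ⟨t, ht, hmem⟩
  rw [Metric.mem_closedBall, dist_eq_norm] at hmem
  set δ : ℝ := θ - α i with hδ_def
  have hinner : (inner ℝ (rayDir (α i)) (rayDir θ) : ℝ) = Real.cos δ := rayDir_inner _ _
  have hsq : ‖t • rayDir (α i) - D • rayDir θ‖ ^ 2
      = t ^ 2 - 2 * (t * D * Real.cos δ) + D ^ 2 := by
    rw [norm_sub_sq_real, norm_smul, norm_smul, rayDir_norm, rayDir_norm,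
      real_inner_smul_left, real_inner_smul_right, hinner]
    simp [Real.norm_eq_abs, abs_of_pos hD, abs_of_nonneg ht, mul_assoc]
  have hsq_le : t ^ 2 - 2 * (t * D * Real.cos δ) + D ^ 2 ≤ (Δ / 2) ^ 2 := by
    rw [← hsq]
    have h0 : (0 : ℝ) ≤ ‖t • rayDir (α i) - D • rayDir θ‖ := norm_nonneg _
    nlinarith
  -- cos δ must be positive
  have hcos : 0 < Real.cos δ := by
    by_contra h
    push_neg at h
    nlinarith [mul_nonneg (mul_nonneg ht hD.le) (neg_nonneg.mpr h), sq_nonneg t]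
  -- and |sin δ| ≤ sin ε
  have hsin : |Real.sin δ| ≤ Real.sin ε := by
    have hsc : Real.sin δ ^ 2 + Real.cos δ ^ 2 = 1 := Real.sin_sq_add_cos_sq δ
    have h1 : D ^ 2 * Real.sin δ ^ 2 ≤ (Δ / 2) ^ 2 := by
      nlinarith [sq_nonneg (t - D * Real.cos δ)]
    rw [hsinε]
    have h2 : Real.sin δ ^ 2 ≤ s ^ 2 := by
      rw [hs_def, div_pow, le_div_iff₀ (by positivity)]
      nlinarith
    exact abs_le_of_sq_le_sq h2 hs0.le
  -- reduce δ mod 2π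
  set k : ℤ := round (δ / (2 * Real.pi)) with hk_def
  set δ' : ℝ := δ - k * (2 * Real.pi) with hδ'_def
  have h2π : (0:ℝ) < 2 * Real.pi := by linarith
  have hδ'_le : |δ'| ≤ Real.pi := by
    have hround : |δ / (2 * Real.pi) - k| ≤ 1 / 2 := by
      rw [hk_def]
      exact abs_sub_round _
    have hq : δ' = (δ / (2 * Real.pi) - k) * (2 * Real.pi) := by
      rw [hδ'_def]
      field_simp
    rw [hq, abs_mul, abs_of_pos h2π]
    have := mul_le_mul_of_nonneg_right hround h2π.le
    linarith
  have hcosδ' : Real.cos δ' = Real.cos δ := by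
    rw [hδ'_def, sub_eq_add_neg, ← neg_mul, ← Int.cast_neg]
    exact Real.cos_add_int_mul_two_pi δ (-k)
  have hsinδ' : Real.sin δ' = Real.sin δ := by
    rw [hδ'_def, sub_eq_add_neg, ← neg_mul, ← Int.cast_neg]
    exact Real.sin_add_int_mul_two_pi δ (-k)
  have hδ'_lt : |δ'| < Real.pi / 2 := by
    by_contra h
    push_neg at h
    have : Real.cos |δ'| ≤ 0 :=
      Real.cos_nonpos_of_pi_div_two_le_of_le h (by linarith)
    rw [Real.cos_abs, hcosδ'] at this
    linarith
  have hδ'_le_ε : |δ'| ≤ ε := by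
    by_contra h
    push_neg at h
    have hlt : Real.sin ε < Real.sin |δ'| :=
      Real.sin_lt_sin_of_lt_of_le_pi_div_two (by linarith) hδ'_lt.le h
    have habs : Real.sin |δ'| ≤ |Real.sin δ'| := by
      rcases abs_cases δ' with ⟨he, _⟩ | ⟨he, _⟩ <;> rw [he]
      · exact le_abs_self _
      · rw [Real.sin_neg]
        exact neg_le_abs _
    rw [hsinδ'] at habs
    linarith
  -- contradiction with x ∉ U
  apply hx
  rw [hU_def, Set.mem_iUnion]
  refine ⟨i, ?_⟩
  rw [Metric.mem_closedBall, dist_eq_norm, ← AddCircle.coe_sub]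
  have hδδ' : ((θ - α i : ℝ) : AddCircle (2 * Real.pi))
      = ((δ' : ℝ) : AddCircle (2 * Real.pi)) := by
    rw [← sub_eq_zero, ← AddCircle.coe_sub, AddCircle.coe_eq_zero_iff]
    exact ⟨k, by rw [zsmul_eq_mul, hδ'_def, hδ_def]; ring⟩
  rw [hδδ']
  have hnorm : ‖((δ' : ℝ) : AddCircle (2 * Real.pi))‖ = |δ'| := by
    rw [AddCircle.norm_coe_eq_abs_iff _ (ne_of_gt h2π)]
    rw [abs_of_pos h2π]
    linarith
  rw [hnorm]
  exact hδ'_le_ε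
end

section
/- There exists a constant c > 0 such that for every sufficiently large natural number n, if X₁, …, Xₙ are independent random variables each uniformly distributed on [0,1), then with probability at least 1/2 there exists an arc of length c·(log n)/n of the circle ℝ/ℤ containing none of the points Xᵢ (mod 1). -/
open MeasureTheory ProbabilityTheory



lemma bonferroni {Ω : Type} [MeasureSpace Ω] [IsProbabilityMeasure (volume : Measure Ω)]
    (B : ℕ → Set Ω) (hB : ∀ j, MeasurableSet (B j)) (m : ℕ) :
    ∑ j ∈ Finset.range m, (volume (B j)).toReal
      - ∑ j ∈ Finset.range m, ∑ k ∈ Finset.range j, (volume (B j ∩ B k)).toReal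
      ≤ (volume (⋃ j ∈ Finset.range m, B j)).toReal := by
  induction m with
  | zero => simp
  | succ m ih =>
      have hU : MeasurableSet (⋃ j ∈ Finset.range m, B j) :=
        MeasurableSet.biUnion (Finset.range m).countable_toSet (fun j _ => hB j)
      have hfin : ∀ s : Set Ω, volume s ≠ ⊤ := fun s => measure_ne_top _ _
      have key : volume (B m ∪ ⋃ j ∈ Finset.range m, B j)
          + volume (B m ∩ ⋃ j ∈ Finset.range m, B j)
          = volume (B m) + volume (⋃ j ∈ Finset.range m, B j) :=
        measure_union_add_inter _ hU
      have key' : (volume (B m ∪ ⋃ j ∈ Finset.range m, B j)).toReal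
          + (volume (B m ∩ ⋃ j ∈ Finset.range m, B j)).toReal
          = (volume (B m)).toReal + (volume (⋃ j ∈ Finset.range m, B j)).toReal := by
        rw [← ENNReal.toReal_add (hfin _) (hfin _), ← ENNReal.toReal_add (hfin _) (hfin _), key]
      have hint : (volume (B m ∩ ⋃ j ∈ Finset.range m, B j)).toReal
          ≤ ∑ k ∈ Finset.range m, (volume (B m ∩ B k)).toReal := by
        have h1 : volume (B m ∩ ⋃ j ∈ Finset.range m, B j)
            ≤ ∑ k ∈ Finset.range m, volume (B m ∩ B k) := by
          rw [Set.inter_iUnion₂]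
          exact le_trans (measure_biUnion_finset_le _ _) le_rfl
        calc (volume (B m ∩ ⋃ j ∈ Finset.range m, B j)).toReal
            ≤ (∑ k ∈ Finset.range m, volume (B m ∩ B k)).toReal :=
              ENNReal.toReal_mono (ENNReal.sum_ne_top.2 fun _ _ => hfin _) h1
          _ = ∑ k ∈ Finset.range m, (volume (B m ∩ B k)).toReal :=
              ENNReal.toReal_sum (fun _ _ => hfin _)
      have hunion : ⋃ j ∈ Finset.range (m+1), B j = B m ∪ ⋃ j ∈ Finset.range m, B j := by
        rw [Finset.range_add_one]
        simp [Set.biUnion_insert]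
      rw [hunion, Finset.sum_range_succ, Finset.sum_range_succ]
      have := key'
      nlinarith [ih, hint, key']

lemma fract_le_iff' {a ε x : ℝ} (ha : 0 ≤ a) (hε : 0 ≤ ε) (h1 : a + ε < 1)
    (hx0 : 0 ≤ x) (hx1 : x < 1) :
    Int.fract (x - a) ≤ ε ↔ a ≤ x ∧ x ≤ a + ε := by
  rcases le_or_gt a x with h | h
  · rw [Int.fract_eq_self.mpr ⟨by linarith, by linarith⟩]
    exact ⟨fun h2 => ⟨h, by linarith⟩, fun ⟨_, h2⟩ => by linarith⟩
  · have heq : Int.fract (x - a) = x - a + 1 := by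
      rw [← Int.fract_add_one, Int.fract_eq_self.mpr ⟨by linarith, by linarith⟩]
    rw [heq]
    constructor
    · intro hle; exfalso; linarith
    · rintro ⟨h2, -⟩; exfalso; linarith

lemma exp_neg_two_le {x : ℝ} (h0 : 0 ≤ x) (h2 : x ≤ 1/2) : Real.exp (-(2*x)) ≤ 1 - x := by
  have h := Real.add_one_le_exp (2*x)
  have hp := Real.exp_pos (2*x)
  have hmul : Real.exp (-(2*x)) * Real.exp (2*x) = 1 := by
    rw [← Real.exp_add]; simp
  nlinarith [Real.exp_pos (-(2*x))]

lemma arc_compl {a ε : ℝ} (ha : 0 ≤ a) (hε : 0 ≤ ε) (h1 : a + ε < 1) :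
    {x : ℝ | ¬ Int.fract (x - a) ≤ ε} ∩ Set.Ico 0 1
      = Set.Ico (0:ℝ) 1 \ Set.Icc a (a+ε) := by
  ext x
  simp only [Set.mem_inter_iff, Set.mem_setOf_eq, Set.mem_Ico, Set.mem_diff, Set.mem_Icc]
  constructor
  · rintro ⟨hf, hx⟩
    exact ⟨hx, fun hc => hf ((fract_le_iff' ha hε h1 hx.1 hx.2).mpr hc)⟩
  · rintro ⟨hx, hc⟩
    exact ⟨fun hf => hc ((fract_le_iff' ha hε h1 hx.1 hx.2).mp hf), hx⟩

lemma arc_vol {a ε : ℝ} (ha : 0 ≤ a) (hε : 0 ≤ ε) (h1 : a + ε < 1) :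
    volume ({x : ℝ | ¬ Int.fract (x - a) ≤ ε} ∩ Set.Ico 0 1) = ENNReal.ofReal (1 - ε) := by
  rw [arc_compl ha hε h1]
  have hsub : Set.Icc a (a+ε) ⊆ Set.Ico (0:ℝ) 1 :=
    fun x hx => ⟨le_trans ha hx.1, lt_of_le_of_lt hx.2 h1⟩
  rw [measure_diff hsub measurableSet_Icc.nullMeasurableSet measure_Icc_lt_top.ne,
    Real.volume_Ico, Real.volume_Icc]
  rw [show (1:ℝ) - 0 = 1 by ring, show a + ε - a = ε by ring]
  exact (ENNReal.ofReal_sub 1 hε).symm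

lemma arc_vol2 {a b ε : ℝ} (ha : 0 ≤ a) (hε : 0 ≤ ε) (hab : a + ε < b) (h1 : b + ε < 1) :
    volume (({x : ℝ | ¬ Int.fract (x - a) ≤ ε} ∩ {x : ℝ | ¬ Int.fract (x - b) ≤ ε})
      ∩ Set.Ico 0 1) = ENNReal.ofReal (1 - 2*ε) := by
  have hb : 0 ≤ b := le_trans (by linarith) hab.le
  have h1a : a + ε < 1 := by linarith
  have hset : ({x : ℝ | ¬ Int.fract (x - a) ≤ ε} ∩ {x : ℝ | ¬ Int.fract (x - b) ≤ ε})
      ∩ Set.Ico 0 1 = Set.Ico (0:ℝ) 1 \ (Set.Icc a (a+ε) ∪ Set.Icc b (b+ε)) := by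
    ext x
    simp only [Set.mem_inter_iff, Set.mem_setOf_eq, Set.mem_Ico, Set.mem_diff, Set.mem_Icc,
      Set.mem_union]
    constructor
    · rintro ⟨⟨hfa, hfb⟩, hx⟩
      refine ⟨hx, ?_⟩
      rintro (hc | hc)
      · exact hfa ((fract_le_iff' ha hε h1a hx.1 hx.2).mpr hc)
      · exact hfb ((fract_le_iff' hb hε h1 hx.1 hx.2).mpr hc)
    · rintro ⟨hx, hc⟩
      exact ⟨⟨fun hf => hc (Or.inl ((fract_le_iff' ha hε h1a hx.1 hx.2).mp hf)),
        fun hf => hc (Or.inr ((fract_le_iff' hb hε h1 hx.1 hx.2).mp hf))⟩, hx⟩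
  rw [hset]
  have hdisj : Disjoint (Set.Icc a (a+ε)) (Set.Icc b (b+ε)) := by
    rw [Set.disjoint_left]
    rintro x ⟨_, hx2⟩ ⟨hx3, _⟩
    linarith
  have hsub : Set.Icc a (a+ε) ∪ Set.Icc b (b+ε) ⊆ Set.Ico (0:ℝ) 1 := by
    rintro x (hx | hx)
    · exact ⟨le_trans ha hx.1, lt_of_le_of_lt hx.2 h1a⟩
    · exact ⟨le_trans hb hx.1, lt_of_le_of_lt hx.2 h1⟩
  rw [measure_diff hsub ((measurableSet_Icc.union measurableSet_Icc).nullMeasurableSet)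
    ((measure_union_le _ _).trans_lt (by simp [measure_Icc_lt_top, ENNReal.add_lt_top])).ne, measure_union hdisj measurableSet_Icc,
    Real.volume_Ico, Real.volume_Icc, Real.volume_Icc]
  rw [show a + ε - a = ε by ring, show b + ε - b = ε by ring, show (1:ℝ) - 0 = 1 by ring,
    ← ENNReal.ofReal_add hε hε, show ε + ε = 2*ε by ring]
  exact (ENNReal.ofReal_sub 1 (by linarith)).symm

lemma indep_prod_lemma {n : ℕ} {Ω : Type} [MeasureSpace Ω]
    (X : Fin n → Ω → ℝ) (hX : ∀ i, Measurable (X i))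
    (hindep : iIndepFun (m := fun _ => Real.measurableSpace) X volume)
    (hmap : ∀ i, Measure.map (X i) volume = volume.restrict (Set.Ico (0 : ℝ) 1))
    (C : Set ℝ) (hC : MeasurableSet C) :
    volume (⋂ i, X i ⁻¹' C) = (volume (C ∩ Set.Ico (0:ℝ) 1)) ^ n := by
  have h := hindep.measure_inter_preimage_eq_mul Finset.univ (sets := fun _ => C)
    (fun i _ => hC)
  rw [show (⋂ i ∈ Finset.univ, X i ⁻¹' C) = ⋂ i, X i ⁻¹' C by simp] at h
  rw [h]
  have heach : ∀ i : Fin n, volume (X i ⁻¹' C) = volume (C ∩ Set.Ico (0:ℝ) 1) := by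
    intro i
    rw [← Measure.map_apply (hX i) hC, hmap i, Measure.restrict_apply hC]
  simp only [heach]
  rw [Finset.prod_const, Finset.card_univ, Fintype.card_fin]

set_option maxHeartbeats 2000000 in
/-- There is a constant `c > 0` such that for every sufficiently large `n`,
if `X₁, …, Xₙ` are i.i.d. uniform on `[0,1)`, then with probability at least `1/2` some
arc of length `c log n / n` of the circle `ℝ/ℤ` (the arc of that length starting at some
`a`) contains none of the points `Xᵢ` (mod 1). -/
theorem uniform_points_max_gap_lower :
    ∃ c : ℝ, 0 < c ∧ ∃ n₀ : ℕ, ∀ n : ℕ, n₀ ≤ n →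
      ∀ (Ω : Type) (_ : MeasureSpace Ω) (_ : IsProbabilityMeasure (volume : Measure Ω))
        (X : Fin n → Ω → ℝ),
        (∀ i, Measurable (X i)) →
        iIndepFun (m := fun _ => Real.measurableSpace) X volume →
        (∀ i, Measure.map (X i) volume = volume.restrict (Set.Ico (0 : ℝ) 1)) →
        (1 / 2 : ENNReal) ≤
          volume {ω : Ω | ∃ a : ℝ, ∀ i : Fin n,
            ¬ Int.fract (X i ω - a) ≤ c * Real.log n / n} := by
  refine ⟨1/8, by norm_num, 16, ?_⟩
  intro n hn Ω mΩ hprob X hX hindep hmap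
  haveI := hprob
  have hn16 : (16:ℝ) ≤ (n:ℝ) := by exact_mod_cast hn
  have hn0 : (0:ℝ) < n := by linarith
  set ε : ℝ := 1/8 * Real.log n / n with hεdef
  set r : ℝ := (n:ℝ) ^ (1/4 : ℝ) with hrdef
  clear_value ε r
  have hr0 : 0 < r := by rw [hrdef]; positivity
  have hr4 : r ^ (4:ℕ) = (n:ℝ) := by
    rw [hrdef, ← Real.rpow_natCast ((n:ℝ)^(1/4:ℝ)) 4, ← Real.rpow_mul hn0.le]
    norm_num
  have hr2 : (2:ℝ) ≤ r := by
    by_contra h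
    push_neg at h
    have h2 : r^2 < 4 := by nlinarith
    have h4 : r^(4:ℕ) < 16 := by nlinarith
    rw [hr4] at h4; linarith
  have hlogr : Real.log r = 1/4 * Real.log n := by
    rw [hrdef, Real.log_rpow hn0]
  have hlogn_pos : 0 < Real.log n := Real.log_pos (by linarith)
  have hε_pos : 0 < ε := by rw [hεdef]; exact div_pos (by linarith) hn0
  have hlogr_le : Real.log r ≤ r - 1 := Real.log_le_sub_one_of_pos hr0
  have hεn : ε * n = 1/2 * Real.log r := by
    rw [hεdef, hlogr]
    field_simp
    ring
  have hεr : ε * (2*r^3) ≤ 1 := by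
    have h1 : ε * r^(4:ℕ) ≤ 1/2 * r := by
      rw [hr4, hεn]; nlinarith [hlogr_le]
    have h2 : 1 - ε*(2*r^3) = 2*(1/2*r - ε*r^(4:ℕ))/r := by field_simp
    have h3 : 0 ≤ 2*(1/2*r - ε*r^(4:ℕ))/r := div_nonneg (by linarith) hr0.le
    linarith [h2 ▸ h3]
  have hr3 : (8:ℝ) ≤ r^3 := by
    nlinarith [mul_nonneg (sub_nonneg.2 hr2) (sq_nonneg r),
      mul_nonneg (sub_nonneg.2 hr2) (show (0:ℝ) ≤ r + 2 by linarith)]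
  have hε14 : ε ≤ 1/16 := by nlinarith [hεr, hε_pos.le, hr3]
  set q : ℝ := (1-ε)^n with hqdef
  clear_value q
  have h1ε : 0 < 1 - ε := by linarith
  have hq_pos : 0 < q := by rw [hqdef]; exact pow_pos h1ε n
  have hq_le1 : q ≤ 1 := by rw [hqdef]; exact pow_le_one₀ h1ε.le (by linarith)
  have hq_ge : r⁻¹ ≤ q := by
    have h1 : Real.exp (-(2*ε)) ≤ 1 - ε := exp_neg_two_le hε_pos.le (by linarith)
    have h2 : Real.exp (-(2*ε)) ^ n ≤ q := by
      rw [hqdef]; exact pow_le_pow_left₀ (Real.exp_pos _).le h1 n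
    have h3 : Real.exp (-(2*ε)) ^ n = Real.exp ((n:ℝ) * (-(2*ε))) := (Real.exp_nat_mul _ n).symm
    calc r⁻¹ = Real.exp (- Real.log r) := by rw [Real.exp_neg, Real.exp_log hr0]
      _ = Real.exp ((n:ℝ) * (-(2*ε))) := by congr 1; nlinarith [hεn]
      _ ≤ q := h3 ▸ h2
  set m : ℕ := ⌈q⁻¹⌉₊ with hmdef
  clear_value m
  have hm1 : 1 ≤ m := by rw [hmdef]; exact Nat.one_le_ceil_iff.mpr (inv_pos.mpr hq_pos)
  have hqinv : q⁻¹ * q = 1 := inv_mul_cancel₀ hq_pos.ne'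
  have hm_lb : 1 ≤ (m:ℝ) * q := by
    have h := Nat.le_ceil q⁻¹
    rw [← hmdef] at h
    nlinarith [mul_le_mul_of_nonneg_right h hq_pos.le]
  have hm_ub : (m:ℝ) * q ≤ 1 + q := by
    have h : (m:ℝ) < q⁻¹ + 1 := by
      rw [hmdef]; exact Nat.ceil_lt_add_one (inv_pos.mpr hq_pos).le
    have h2 : (m:ℝ)*q < (q⁻¹+1)*q := mul_lt_mul_of_pos_right h hq_pos
    have h3 : (q⁻¹+1)*q = 1 + q := by field_simp
    linarith
  have hm_r : (m:ℝ) ≤ 2*r := by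
    have hqr : q⁻¹ ≤ r := by
      have h1 : 1 ≤ q * r := by
        have h2 := mul_le_mul_of_nonneg_right hq_ge hr0.le
        rwa [inv_mul_cancel₀ hr0.ne'] at h2
      have h2 := mul_le_mul_of_nonneg_left h1 (inv_pos.mpr hq_pos).le
      rwa [mul_one, ← mul_assoc, inv_mul_cancel₀ hq_pos.ne', one_mul] at h2
    have h : (m:ℝ) < q⁻¹ + 1 := by
      rw [hmdef]; exact Nat.ceil_lt_add_one (inv_pos.mpr hq_pos).le
    linarith
  have h4re : 4*r*ε ≤ 2/r^2 := by
    rw [le_div_iff₀ (by positivity)]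
    nlinarith [hεr]
  have h2r2 : 2/r^2 ≤ 1/2 := by
    rw [div_le_iff₀ (by positivity)]
    nlinarith [hr2]
  have hfit : ∀ j : ℕ, j < m → 2*(j:ℝ)*ε + ε < 1 := by
    intro j hj
    have hjm : (j:ℝ) + 1 ≤ (m:ℝ) := by exact_mod_cast hj
    have h1 : 2*(j:ℝ)*ε + ε < 2*(m:ℝ)*ε := by nlinarith [hε_pos]
    have h2 : 2*(m:ℝ)*ε ≤ 4*r*ε := by nlinarith [hε_pos.le, hm_r]
    linarith
  -- the arcs and events
  set C : ℕ → Set ℝ := fun j => {x : ℝ | ¬ Int.fract (x - 2*(j:ℝ)*ε) ≤ ε} with hCdef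
  have hCmeas : ∀ j, MeasurableSet (C j) := by
    intro j
    have : C j = (fun x : ℝ => Int.fract (x - 2*(j:ℝ)*ε)) ⁻¹' (Set.Iic ε)ᶜ := by
      ext x; simp [hCdef]
    rw [this]
    exact (measurable_fract.comp (measurable_id.sub_const _)) measurableSet_Iic.compl
  set B : ℕ → Set Ω := fun j => ⋂ i, X i ⁻¹' (C j) with hBdef
  have hBmeas : ∀ j, MeasurableSet (B j) :=
    fun j => MeasurableSet.iInter (fun i => (hX i) (hCmeas j))
  have hPB : ∀ j, j < m → volume (B j) = ENNReal.ofReal (1-ε) ^ n := by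
    intro j hj
    rw [hBdef]
    rw [indep_prod_lemma X hX hindep hmap _ (hCmeas j)]
    rw [arc_vol (by positivity) hε_pos.le (hfit j hj)]
  have hPBB : ∀ j k, k < j → j < m → volume (B j ∩ B k) = ENNReal.ofReal (1-2*ε) ^ n := by
    intro j k hkj hjm
    have hBint : B j ∩ B k = ⋂ i, X i ⁻¹' (C k ∩ C j) := by
      rw [hBdef]
      simp only [Set.preimage_inter]
      rw [Set.iInter_inter_distrib]
      exact Set.inter_comm _ _
    rw [hBint, indep_prod_lemma X hX hindep hmap _ ((hCmeas k).inter (hCmeas j))]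
    have hkj' : (k:ℝ) + 1 ≤ (j:ℝ) := by exact_mod_cast hkj
    have hab : 2*(k:ℝ)*ε + ε < 2*(j:ℝ)*ε := by nlinarith [hε_pos]
    rw [arc_vol2 (by positivity) hε_pos.le hab (hfit j hjm)]
  -- pass to reals
  have h1εnn : (0:ℝ) ≤ 1 - ε := h1ε.le
  have h12εnn : (0:ℝ) ≤ 1 - 2*ε := by linarith
  have htB : ∀ j ∈ Finset.range m, (volume (B j)).toReal = q := by
    intro j hj
    rw [hPB j (Finset.mem_range.mp hj), ENNReal.toReal_pow, ENNReal.toReal_ofReal h1εnn, hqdef]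
  have htBB : ∀ j ∈ Finset.range m, ∀ k ∈ Finset.range j,
      (volume (B j ∩ B k)).toReal = (1-2*ε)^n := by
    intro j hj k hk
    rw [hPBB j k (Finset.mem_range.mp hk) (Finset.mem_range.mp hj),
      ENNReal.toReal_pow, ENNReal.toReal_ofReal h12εnn]
  have hq2 : (1-2*ε)^n ≤ q^2 := by
    have h : 1-2*ε ≤ (1-ε)^2 := by nlinarith [sq_nonneg ε]
    calc (1-2*ε)^n ≤ ((1-ε)^2)^n := pow_le_pow_left₀ h12εnn h n
      _ = q^2 := by rw [hqdef, ← pow_mul, ← pow_mul, Nat.mul_comm]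
  have hbon := bonferroni B hBmeas m
  rw [Finset.sum_congr rfl htB, Finset.sum_const, Finset.card_range, nsmul_eq_mul] at hbon
  have hsum2 : ∑ j ∈ Finset.range m, ∑ k ∈ Finset.range j, (volume (B j ∩ B k)).toReal
      ≤ ((m:ℝ) * ((m:ℝ) - 1) / 2) * q^2 := by
    have e1 : ∑ j ∈ Finset.range m, ∑ k ∈ Finset.range j, (volume (B j ∩ B k)).toReal
        = ∑ j ∈ Finset.range m, (j:ℝ) * (1-2*ε)^n := by
      refine Finset.sum_congr rfl (fun j hj => ?_)
      rw [Finset.sum_congr rfl (htBB j hj), Finset.sum_const, Finset.card_range, nsmul_eq_mul]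
    rw [e1, ← Finset.sum_mul]
    have e2 : (∑ j ∈ Finset.range m, (j:ℝ)) = (m:ℝ) * ((m:ℝ) - 1) / 2 := by
      have := Finset.sum_range_id_mul_two m
      have hc : ((∑ i ∈ Finset.range m, i : ℕ) : ℝ) * 2 = (m:ℝ) * ((m:ℝ) - 1) := by
        rw [← Nat.cast_ofNat, ← Nat.cast_mul, this, Nat.cast_mul, Nat.cast_sub hm1]
        push_cast; ring
      push_cast at hc ⊢
      linarith
    rw [e2]
    have hsq : (0:ℝ) ≤ (m:ℝ) * ((m:ℝ) - 1) / 2 := by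
      have : (1:ℝ) ≤ (m:ℝ) := by exact_mod_cast hm1
      nlinarith
    nlinarith [hq2, hsq, sq_nonneg q]
  have hmain : 1/2 ≤ (volume (⋃ j ∈ Finset.range m, B j)).toReal := by
    have hfinal : (1:ℝ)/2 ≤ (m:ℝ) * q - ((m:ℝ) * ((m:ℝ) - 1) / 2) * q^2 := by
      nlinarith [mul_nonneg (by linarith [hm_lb] : (0:ℝ) ≤ (m:ℝ)*q - 1)
        (by linarith [hm_ub] : (0:ℝ) ≤ 1 + q - (m:ℝ)*q), hq_pos.le, hq_le1]
    linarith [hbon, hsum2]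
  -- conclude
  have hUsub : (⋃ j ∈ Finset.range m, B j) ⊆
      {ω : Ω | ∃ a : ℝ, ∀ i : Fin n, ¬ Int.fract (X i ω - a) ≤ ε} := by
    intro ω hω
    rcases Set.mem_iUnion₂.mp hω with ⟨j, hj, hωj⟩
    refine ⟨2*(j:ℝ)*ε, fun i => ?_⟩
    have := Set.mem_iInter.mp hωj i
    exact this
  have hle : volume (⋃ j ∈ Finset.range m, B j) ≤
      volume {ω : Ω | ∃ a : ℝ, ∀ i : Fin n, ¬ Int.fract (X i ω - a) ≤ ε} :=
    measure_mono hUsub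
  refine le_trans ?_ hle
  have hfin : volume (⋃ j ∈ Finset.range m, B j) ≠ ⊤ := measure_ne_top _ _
  have h := ENNReal.ofReal_le_ofReal hmain
  rw [ENNReal.ofReal_toReal hfin] at h
  refine le_trans (le_of_eq ?_) h
  rw [ENNReal.ofReal_div_of_pos (by norm_num), ENNReal.ofReal_one, ENNReal.ofReal_ofNat]
end

section
/- There exists a constant C > 0 such that for all reals D and Δ with 0 < Δ ≤ D/2, if n = ⌈C·(D/Δ)·log(D/Δ)⌉ and α₁, …, αₙ are independent random angles each uniformly distributed on [0, 2π), then with probability at least 1 − 1/n the following holds: for every point p ∈ ℝ² with ‖p‖ = D, at least one of the rays from the origin at angles α₁, …, αₙ intersects the closed ball of radius Δ/2 centered at p. -/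
open MeasureTheory ProbabilityTheory
set_option maxHeartbeats 1000000

lemma bcpfa_norm_sub (a b : ℝ) : ‖rayDir a - rayDir b‖ ≤ |a - b| := by
  have h1 : ‖rayDir a - rayDir b‖ = Real.sqrt ((Real.cos a - Real.cos b)^2 + (Real.sin a - Real.sin b)^2) := by
    rw [EuclideanSpace.norm_eq]
    simp [Fin.sum_univ_two]
    rfl
  rw [h1]
  have h2 : (Real.cos a - Real.cos b)^2 + (Real.sin a - Real.sin b)^2 = 2 - 2 * Real.cos (a - b) := by
    rw [Real.cos_sub]
    have := Real.sin_sq_add_cos_sq a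
    have := Real.sin_sq_add_cos_sq b
    ring_nf
    nlinarith
  have h3 : 2 - 2 * Real.cos (a - b) ≤ (a - b)^2 := by
    have := Real.one_sub_sq_div_two_le_cos (x := a - b)
    nlinarith
  calc Real.sqrt _ ≤ Real.sqrt ((a-b)^2) := Real.sqrt_le_sqrt (by rw [h2]; exact h3)
    _ = |a - b| := Real.sqrt_sq_eq_abs _

lemma bcpfa_polar (D : ℝ) (hD : 0 < D) (p : EuclideanSpace ℝ (Fin 2)) (hp : ‖p‖ = D) :
    ∃ θ ∈ Set.Ico (0:ℝ) (2*Real.pi), p = D • rayDir θ := by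
  set z : ℂ := ⟨p 0, p 1⟩ with hz
  have habs : ‖z‖ = D := by
    rw [Complex.norm_def, Complex.normSq_mk, ← hp, EuclideanSpace.norm_eq]
    simp [Fin.sum_univ_two, sq]
  have hz0 : z ≠ 0 := by
    intro h; rw [h] at habs; simp at habs; linarith
  have hcos : Real.cos (Complex.arg z) = p 0 / D := by
    rw [Complex.cos_arg hz0, habs]
  have hsin : Real.sin (Complex.arg z) = p 1 / D := by
    rw [Complex.sin_arg, habs]
  set θ' := Complex.arg z
  have harg1 : -Real.pi < θ' := Complex.neg_pi_lt_arg z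
  have harg2 : θ' ≤ Real.pi := Complex.arg_le_pi z
  have hπ : 0 < Real.pi := Real.pi_pos
  refine ⟨if θ' < 0 then θ' + 2*Real.pi else θ', ?_, ?_⟩
  · split_ifs with h
    · constructor <;> [linarith; linarith]
    · constructor <;> [linarith; linarith]
  · have hc : Real.cos (if θ' < 0 then θ' + 2*Real.pi else θ') = p 0 / D := by
      split_ifs with h
      · rw [Real.cos_add_two_pi]; exact hcos
      · exact hcos
    have hs : Real.sin (if θ' < 0 then θ' + 2*Real.pi else θ') = p 1 / D := by
      split_ifs with h
      · rw [Real.sin_add_two_pi]; exact hsin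
      · exact hsin
    ext i
    fin_cases i
    · show p 0 = D * Real.cos _
      rw [hc]; field_simp
    · show p 1 = D * Real.sin _
      rw [hs]; field_simp

lemma bcpfa_numeric (x : ℝ) (hx : 2 ≤ x) :
    (⌈4 * Real.pi * x⌉₊ : ℝ) * (1 - 1/(⌈4 * Real.pi * x⌉₊:ℝ))^(⌈1000 * x * Real.log x⌉₊) ≤
      1/(⌈1000 * x * Real.log x⌉₊:ℝ) := by
  have hπ : 0 < Real.pi := Real.pi_pos
  have hπ3 : 3 < Real.pi := Real.pi_gt_three
  have hπ4 : Real.pi ≤ 3.15 := by linarith [Real.pi_lt_d2]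
  have hx0 : (0:ℝ) < x := by linarith
  have hlog : Real.log 2 ≤ Real.log x := Real.log_le_log (by norm_num) hx
  have hlog2 : (0.69:ℝ) ≤ Real.log 2 := by
    have := Real.log_two_gt_d9; linarith
  have hlogpos : 0 < Real.log x := by linarith
  have hlogx : Real.log x ≤ x := (Real.log_le_sub_one_of_pos hx0).trans (by linarith)
  set m : ℕ := ⌈4 * Real.pi * x⌉₊ with hm
  set n : ℕ := ⌈1000 * x * Real.log x⌉₊ with hn
  have hm_lb : 4 * Real.pi * x ≤ (m:ℝ) := Nat.le_ceil _
  have hm_ub : (m:ℝ) ≤ 14 * x := by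
    have h := Nat.ceil_lt_add_one (by positivity : (0:ℝ) ≤ 4 * Real.pi * x)
    have : (m:ℝ) ≤ 4 * Real.pi * x + 1 := by rw [hm]; linarith
    nlinarith
  have hmpos : (1:ℝ) ≤ (m:ℝ) := by nlinarith
  have hn_lb : 1000 * x * Real.log x ≤ (n:ℝ) := Nat.le_ceil _
  have hn_ub : (n:ℝ) ≤ 1001 * x^2 := by
    have h := Nat.ceil_lt_add_one (by positivity : (0:ℝ) ≤ 1000 * x * Real.log x)
    have : (n:ℝ) ≤ 1000 * x * Real.log x + 1 := by rw [hn]; linarith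
    nlinarith
  have hnpos : (1:ℝ) ≤ (n:ℝ) := by nlinarith
  have hkey : (m:ℝ) * n ≤ Real.exp ((n:ℝ) / m) := by
    have h71 : 71 * Real.log x ≤ (n:ℝ) / m := by
      rw [le_div_iff₀ (by linarith)]
      have h1 : 71 * Real.log x * (m:ℝ) ≤ 71 * Real.log x * (14 * x) :=
        mul_le_mul_of_nonneg_left hm_ub (by positivity)
      nlinarith
    have hexp : x ^ (71:ℕ) = Real.exp (71 * Real.log x) := by
      have := Real.exp_nat_mul (Real.log x) 71
      rw [Real.exp_log hx0] at this
      rw [← this]; norm_num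
    have hx68 : (14014:ℝ) ≤ x ^ (68:ℕ) := by
      calc (14014:ℝ) ≤ 2 ^ (68:ℕ) := by norm_num
        _ ≤ x ^ (68:ℕ) := pow_le_pow_left₀ (by norm_num) hx _
    have hmn : (m:ℝ) * n ≤ 14014 * x^3 := by nlinarith
    calc (m:ℝ) * n ≤ 14014 * x^3 := hmn
      _ ≤ x ^ (68:ℕ) * x^3 := by nlinarith [pow_pos hx0 3]
      _ = x ^ (71:ℕ) := by ring
      _ = Real.exp (71 * Real.log x) := hexp
      _ ≤ Real.exp ((n:ℝ)/m) := Real.exp_le_exp.mpr h71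
  have hmpos' : (0:ℝ) < (m:ℝ) := by linarith
  have hstep : (1 - 1/(m:ℝ))^n ≤ Real.exp (-((n:ℝ)/m)) := by
    have h1 : (1 - 1/(m:ℝ)) ≤ Real.exp (-(1/(m:ℝ))) := by
      have := Real.add_one_le_exp (-(1/(m:ℝ))); linarith
    have h0 : (0:ℝ) ≤ 1 - 1/(m:ℝ) := by
      rw [sub_nonneg, div_le_one hmpos']; exact hmpos
    calc (1 - 1/(m:ℝ))^n ≤ (Real.exp (-(1/(m:ℝ))))^n := pow_le_pow_left₀ h0 h1 n
      _ = Real.exp ((n:ℕ) * (-(1/(m:ℝ)))) := (Real.exp_nat_mul _ n).symm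
      _ = Real.exp (-((n:ℝ)/m)) := by rw [mul_neg, mul_one_div]
  calc (m:ℝ) * (1 - 1/(m:ℝ))^n ≤ (m:ℝ) * Real.exp (-((n:ℝ)/m)) :=
        mul_le_mul_of_nonneg_left hstep (by linarith)
    _ ≤ 1/(n:ℝ) := by
        rw [Real.exp_neg]
        rw [mul_inv_le_iff₀ (Real.exp_pos _), one_div, inv_mul_eq_div, le_div_iff₀ (by linarith)]
        linarith [hkey]

lemma bcpfa_main (D Δ : ℝ) (hΔ : 0 < Δ) (hΔD : Δ ≤ D / 2) (n : ℕ)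
    (hndef : n = ⌈(1000:ℝ) * (D / Δ) * Real.log (D / Δ)⌉₊)
    (Ω : Type) [mΩ : MeasureSpace Ω] [hprob : IsProbabilityMeasure (volume : Measure Ω)]
    (α : Fin n → Ω → ℝ)
    (hmeas : ∀ i, Measurable (α i))
    (hindep : iIndepFun α volume)
    (hmap : ∀ i, Measure.map (α i) volume =
      (ENNReal.ofReal (2 * Real.pi))⁻¹ • volume.restrict (Set.Ico (0 : ℝ) (2 * Real.pi))) :
    ENNReal.ofReal (1 - 1 / (n : ℝ)) ≤
      volume {ω : Ω | ∀ p : EuclideanSpace ℝ (Fin 2), ‖p‖ = D →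
        ∃ i, ∃ t : ℝ, 0 ≤ t ∧ t • rayDir (α i ω) ∈ Metric.closedBall p (Δ / 2)} := by
  have hπ : 0 < Real.pi := Real.pi_pos
  set x : ℝ := D / Δ with hxdef
  have hD : 0 < D := by linarith
  have hx2 : (2:ℝ) ≤ x := by
    rw [hxdef, le_div_iff₀ hΔ]; linarith
  have hx0 : (0:ℝ) < x := by linarith
  set m : ℕ := ⌈4 * Real.pi * x⌉₊ with hmdef
  have hm_lb : 4 * Real.pi * x ≤ (m:ℝ) := Nat.le_ceil _
  have hmposR : (0:ℝ) < (m:ℝ) := lt_of_lt_of_le (by nlinarith) hm_lb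
  have hmpos : 0 < m := by exact_mod_cast hmposR
  have hlogpos : 0 < Real.log x := Real.log_pos (by linarith)
  have hn_lb : 1000 * x * Real.log x ≤ (n:ℝ) := by rw [hndef]; exact Nat.le_ceil _
  have hnposR : (0:ℝ) < (n:ℝ) := lt_of_lt_of_le (by positivity) hn_lb
  have hnpos : 0 < n := by exact_mod_cast hnposR
  -- arcs
  set S : Fin m → Set ℝ := fun j =>
    Set.Ico (2 * Real.pi * (j:ℕ) / m) (2 * Real.pi * ((j:ℕ) + 1) / m) with hSdef
  have hSsub : ∀ j, S j ⊆ Set.Ico (0:ℝ) (2 * Real.pi) := by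
    intro j
    apply Set.Ico_subset_Ico
    · positivity
    · rw [div_le_iff₀ hmposR]
      have : ((j:ℕ):ℝ) + 1 ≤ (m:ℝ) := by
        have := j.isLt; exact_mod_cast this
      nlinarith
  -- probability of each arc
  have harc : ∀ i (j : Fin m), volume (α i ⁻¹' (S j)) = ENNReal.ofReal (1/(m:ℝ)) := by
    intro i j
    rw [hSdef]
    rw [← Measure.map_apply (hmeas i) measurableSet_Ico, hmap i, Measure.smul_apply,
      Measure.restrict_apply measurableSet_Ico,
      Set.inter_eq_self_of_subset_left (hSsub j), Real.volume_Ico, smul_eq_mul]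
    have h1 : 2 * Real.pi * ((j:ℕ) + 1) / m - 2 * Real.pi * (j:ℕ) / m
        = 2 * Real.pi * (1/(m:ℝ)) := by field_simp; ring
    have h2 : ENNReal.ofReal (2 * Real.pi * (1/(m:ℝ)))
        = ENNReal.ofReal (2 * Real.pi) * ENNReal.ofReal (1/(m:ℝ)) :=
      ENNReal.ofReal_mul (by positivity)
    rw [h1, h2, ← mul_assoc,
      ENNReal.inv_mul_cancel (by positivity) ENNReal.ofReal_ne_top, one_mul]
  have harcc : ∀ i (j : Fin m),
      volume (α i ⁻¹' (S j)ᶜ) = ENNReal.ofReal (1 - 1/(m:ℝ)) := by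
    intro i j
    rw [Set.preimage_compl, measure_compl ((hmeas i) measurableSet_Ico) (measure_ne_top _ _),
      measure_univ, harc i j, ENNReal.ofReal_sub _ (by positivity), ENNReal.ofReal_one]
  -- bad events
  set B : Fin m → Set Ω := fun j => ⋂ i, α i ⁻¹' (S j)ᶜ with hBdef
  have hBmeas : ∀ j, MeasurableSet (B j) :=
    fun j => MeasurableSet.iInter fun i => (hmeas i) measurableSet_Ico.compl
  have hBprob : ∀ j, volume (B j) = ENNReal.ofReal ((1 - 1/(m:ℝ))^n) := by
    intro j
    rw [hBdef]
    rw [hindep.meas_iInter (fun i => ⟨(S j)ᶜ, measurableSet_Ico.compl, rfl⟩)]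
    simp only [harcc]
    rw [Finset.prod_const, ENNReal.ofReal_pow (by
      rw [sub_nonneg, div_le_one hmposR]; exact_mod_cast hmpos)]
    congr 1
    simp
  -- union bound
  have hUnion : volume (⋃ j, B j) ≤ ENNReal.ofReal (1/(n:ℝ)) := by
    calc volume (⋃ j, B j) ≤ ∑' j, volume (B j) := measure_iUnion_le _
      _ = ∑ j : Fin m, volume (B j) := tsum_fintype _
      _ = m * ENNReal.ofReal ((1 - 1/(m:ℝ))^n) := by
          simp only [hBprob, Finset.sum_const, Finset.card_univ, Fintype.card_fin,
            nsmul_eq_mul]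
      _ = ENNReal.ofReal ((m:ℝ) * (1 - 1/(m:ℝ))^n) := by
          rw [ENNReal.ofReal_mul (by positivity), ENNReal.ofReal_natCast]
      _ ≤ ENNReal.ofReal (1/(n:ℝ)) := by
          apply ENNReal.ofReal_le_ofReal
          have h := bcpfa_numeric x hx2
          rw [hmdef, hndef, hxdef]
          rw [hxdef] at h
          exact h
  -- good event is contained in the target
  have hGsub : (⋃ j, B j)ᶜ ⊆ {ω : Ω | ∀ p : EuclideanSpace ℝ (Fin 2), ‖p‖ = D →
      ∃ i, ∃ t : ℝ, 0 ≤ t ∧ t • rayDir (α i ω) ∈ Metric.closedBall p (Δ / 2)} := by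
    intro ω hω p hp
    have hall : ∀ j : Fin m, ∃ i, α i ω ∈ S j := by
      intro j
      by_contra hcon
      push_neg at hcon
      exact hω (Set.mem_iUnion.mpr ⟨j, Set.mem_iInter.mpr fun i => hcon i⟩)
    obtain ⟨θ, hθmem, hpθ⟩ := bcpfa_polar D hD p hp
    obtain ⟨hθ0, hθ2π⟩ := hθmem
    -- the arc containing θ
    set c : ℝ := 2 * Real.pi / m with hcdef
    have hc0 : 0 < c := by positivity
    have hθc : 0 ≤ θ / c := by positivity
    set j : ℕ := ⌊θ / c⌋₊ with hjdef
    have hjm : j < m := by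
      rw [hjdef, Nat.floor_lt hθc]
      rw [div_lt_iff₀ hc0, hcdef]
      field_simp
      exact hθ2π
    have hθlow : c * j ≤ θ := by
      rw [← le_div_iff₀' hc0]
      exact Nat.floor_le hθc
    have hθhigh : θ < c * (j + 1) := by
      rw [← div_lt_iff₀' hc0]
      exact Nat.lt_floor_add_one _
    obtain ⟨i, hi⟩ := hall ⟨j, hjm⟩
    obtain ⟨hi1, hi2⟩ := hi
    have hval : (((⟨j, hjm⟩ : Fin m) : ℕ) : ℝ) = (j:ℝ) := rfl
    rw [hval] at hi1 hi2
    have harc_eq : ∀ k : ℝ, 2 * Real.pi * k / m = c * k := by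
      intro k; rw [hcdef]; ring
    rw [harc_eq] at hi1 hi2
    set a : ℝ := α i ω
    have habs : |a - θ| ≤ c := by
      rw [abs_le]; constructor <;> nlinarith
    have hcΔ : c ≤ Δ / (2 * D) := by
      rw [hcdef, div_le_div_iff₀ hmposR (by linarith)]
      have : 4 * Real.pi * x * Δ ≤ (m:ℝ) * Δ := mul_le_mul_of_nonneg_right hm_lb (le_of_lt hΔ)
      rw [hxdef] at this
      field_simp at this ⊢
      nlinarith
    refine ⟨i, D, le_of_lt hD, ?_⟩
    rw [Metric.mem_closedBall, dist_eq_norm, hpθ, ← smul_sub, norm_smul,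
      Real.norm_eq_abs, abs_of_pos hD]
    have hnorm : ‖rayDir a - rayDir θ‖ ≤ Δ / (2 * D) :=
      le_trans (bcpfa_norm_sub a θ) (le_trans habs hcΔ)
    calc D * ‖rayDir a - rayDir θ‖ ≤ D * (Δ / (2 * D)) :=
          mul_le_mul_of_nonneg_left hnorm (le_of_lt hD)
      _ = Δ / 2 := by field_simp
  -- conclude
  have hcompl : volume ((⋃ j, B j)ᶜ) = 1 - volume (⋃ j, B j) := by
    rw [measure_compl (MeasurableSet.iUnion hBmeas) (measure_ne_top _ _), measure_univ]
  calc ENNReal.ofReal (1 - 1 / (n : ℝ))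
      = 1 - ENNReal.ofReal (1/(n:ℝ)) := by
        rw [ENNReal.ofReal_sub _ (by positivity), ENNReal.ofReal_one]
    _ ≤ 1 - volume (⋃ j, B j) := tsub_le_tsub_left hUnion 1
    _ = volume ((⋃ j, B j)ᶜ) := hcompl.symm
    _ ≤ _ := measure_mono hGsub

/-- There is a constant `C > 0` such that for all `0 < Δ ≤ D/2`, with
`n = ⌈C (D/Δ) log (D/Δ)⌉` independent spoke angles uniform on `[0, 2π)`, with probability
at least `1 - 1/n`, for every point `p` with `‖p‖ = D` some of the `n` rays from the
origin intersects the closed ball of radius `Δ/2` around `p`. -/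
theorem bCPFA_discovery_whp :
    ∃ C : ℝ, 0 < C ∧ ∀ D Δ : ℝ, 0 < Δ → Δ ≤ D / 2 →
      ∀ (Ω : Type) (_ : MeasureSpace Ω) (_ : IsProbabilityMeasure (volume : Measure Ω))
        (α : Fin ⌈C * (D / Δ) * Real.log (D / Δ)⌉₊ → Ω → ℝ),
        (∀ i, Measurable (α i)) →
        iIndepFun α volume →
        (∀ i, Measure.map (α i) volume =
          (ENNReal.ofReal (2 * Real.pi))⁻¹ • volume.restrict (Set.Ico (0 : ℝ) (2 * Real.pi))) →
        ENNReal.ofReal (1 - 1 / (⌈C * (D / Δ) * Real.log (D / Δ)⌉₊ : ℝ)) ≤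
          volume {ω : Ω | ∀ p : EuclideanSpace ℝ (Fin 2), ‖p‖ = D →
            ∃ i, ∃ t : ℝ, 0 ≤ t ∧ t • rayDir (α i ω) ∈ Metric.closedBall p (Δ / 2)} := by
  refine ⟨1000, by norm_num, ?_⟩
  intro D Δ hΔ hΔD Ω mΩ hprob α hmeas hindep hmap
  exact bcpfa_main D Δ hΔ hΔD _ rfl Ω α hmeas hindep hmap
end
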